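/- Every legal multiset O of set/clear operations on a finite family of Boolean bits with initial state v admits a complete valid execution: there is an ordering of all operations of O into a sequence such that each operation, applied in order, actually flips its designated bit (each set is applied to a currently-false bit and each clear to a currently-true bit). In particular, a fully concurrent execution of a legal multiset, in which each blocked operation retries, never deadlocks. -/
import Mathlib


/-- A multiset `O` of set/clear operations (an operation `(k, b)` sets bit `k` to
`b`; `b = true` is a set, `b = false` is a clear) on a family of bits with state
`v` is legal if for every bit `k` the set-surplus
`S(k) = (#set ops on k) − (#clear ops on k)`, as an integer, lies in `{-1, 0, 1}`
and `v k + S(k) ∈ {0, 1}` (identifying `false` with 0 and `true` with 1). -/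
def Legal {ι : Type*} [DecidableEq ι] (O : Multiset (ι × Bool)) (v : ι → Bool) : Prop :=
  ∀ k : ι,
    ((O.count (k, true) : ℤ) - (O.count (k, false) : ℤ) ∈ ({-1, 0, 1} : Set ℤ)) ∧
    (((v k).toNat : ℤ) + ((O.count (k, true) : ℤ) - (O.count (k, false) : ℤ))
        ∈ ({0, 1} : Set ℤ))

/-- `ValidFlipSeq v ops` means that the sequence of operations `ops`, applied in
order to the family of bits with initial state `v`, actually flips each designated
bit (each set is applied to a currently-false bit, each clear to a currently-true
bit). -/
def ValidFlipSeq {ι : Type*} [DecidableEq ι] : (ι → Bool) → List (ι × Bool) → Prop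
  | _, [] => True
  | v, op :: rest => v op.1 = !op.2 ∧ ValidFlipSeq (Function.update v op.1 op.2) rest

theorem stmt5_aux {ι : Type*} [DecidableEq ι] :
    ∀ (n : ℕ) (O : Multiset (ι × Bool)) (v : ι → Bool), O.card = n → Legal O v →
    ∃ l : List (ι × Bool), (l : Multiset (ι × Bool)) = O ∧ ValidFlipSeq v l := by
  intro n
  induction n with
  | zero =>
    intro O v hcard _
    exact ⟨[], by simpa using (Multiset.card_eq_zero.mp hcard).symm, trivial⟩
  | succ n IH =>
    intro O v hcard hO
    obtain ⟨⟨k, b⟩, hmem⟩ := Multiset.card_pos_iff_exists_mem.mp (by rw [hcard]; exact n.succ_pos)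
    set b' := !(v k) with hb'
    have hcnt : 1 ≤ O.count (k, b') := by
      have h1 := (hO k).1
      have h2 := (hO k).2
      have hb : 1 ≤ O.count (k, b) := Multiset.one_le_count_iff_mem.mpr hmem
      simp only [Set.mem_insert_iff, Set.mem_singleton_iff] at h1 h2
      cases hv : v k <;> cases b <;> simp_all [Bool.toNat] <;> omega
    have hmem' : (k, b') ∈ O := Multiset.one_le_count_iff_mem.mp hcnt
    set O' := O.erase (k, b') with hO'
    set v' := Function.update v k b' with hv'
    have hcard' : O'.card = n := by
      rw [hO', Multiset.card_erase_of_mem hmem', hcard]; rfl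
    have hLegal' : Legal O' v' := by
      intro j
      by_cases hj : j = k
      · subst hj
        have hc1 : O'.count (j, b') = O.count (j, b') - 1 := by
          rw [hO', Multiset.count_erase_self]
        have hc2 : O'.count (j, !b') = O.count (j, !b') := by
          rw [hO', Multiset.count_erase_of_ne (by simp)]
        have hvj : v' j = b' := by simp [hv']
        have h1 := (hO j).1
        have h2 := (hO j).2
        simp only [Set.mem_insert_iff, Set.mem_singleton_iff] at h1 h2 ⊢
        cases hv : v j <;>
          simp_all [Bool.toNat] <;> omega
      · have hc1 : O'.count (j, true) = O.count (j, true) := by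
          rw [hO', Multiset.count_erase_of_ne (by simp [hj])]
        have hc2 : O'.count (j, false) = O.count (j, false) := by
          rw [hO', Multiset.count_erase_of_ne (by simp [hj])]
        have hvj : v' j = v j := by simp [hv', Function.update_of_ne hj]
        rw [hc1, hc2, hvj]
        exact hO j
    obtain ⟨l, hl, hvalid⟩ := IH O' v' hcard' hLegal'
    refine ⟨(k, b') :: l, ?_, ?_⟩
    · show (k, b') ::ₘ (l : Multiset (ι × Bool)) = O
      rw [hl, hO']
      exact Multiset.cons_erase hmem'
    · exact ⟨by simp [hb'], hvalid⟩

/-- Every legal multiset `O` of set/clear operations on a finite family of Boolean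
bits with initial state `v` admits a complete valid execution: there is an
ordering of all operations of `O` into a sequence such that each operation,
applied in order, actually flips its designated bit. In particular, a fully
concurrent execution of a legal multiset never deadlocks. -/
theorem stmt5 {ι : Type*} [Fintype ι] [DecidableEq ι]
    (O : Multiset (ι × Bool)) (v : ι → Bool) (hO : Legal O v) :
    ∃ l : List (ι × Bool), (l : Multiset (ι × Bool)) = O ∧ ValidFlipSeq v l :=
  stmt5_aux O.card O v rfl hO
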